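/- If p ≡ 3 (mod 20) or p ≡ 7 (mod 20) is prime, then there do not exist integers u and v with F_p = u^2 + p v^2. -/

import Mathlib

open Polynomial

instance fact_prime_five : Fact (Nat.Prime 5) := ⟨by norm_num⟩

lemma leg_five_three : legendreSym 5 3 = -1 := by decide

lemma leg_five_two : legendreSym 5 2 = -1 := by decide

lemma fib_pow_aux {R : Type*} [CommRing R] (α : R) (hα : α ^ 2 = α + 1) :
    ∀ n : ℕ, α ^ (n + 1) = (Nat.fib (n + 1) : R) * α + (Nat.fib n : R) := by
  intro n
  induction n with
  | zero => simp
  | succ n ih =>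
    have hstep : α ^ (n + 1 + 1) = α ^ (n + 1) * α := by ring
    rw [hstep, Nat.fib_add_two]
    push_cast
    linear_combination α * ih + (Nat.fib (n + 1) : R) * hα

theorem no_repr_of_three_seven_mod_twenty (p : ℕ) (hp : p.Prime)
    (h : p % 20 = 3 ∨ p % 20 = 7) :
    ¬ ∃ u v : ℤ, (Nat.fib p : ℤ) = u ^ 2 + p * v ^ 2 := by
  haveI : Fact p.Prime := ⟨hp⟩
  have hp4 : p % 4 = 3 := by rcases h with h | h <;> omega
  have hp5 : p % 5 = 3 ∨ p % 5 = 2 := by rcases h with h | h <;> omega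
  have hp2 : p ≠ 2 := by omega
  have hpodd : p % 2 = 1 := by omega
  -- 5 is not a square mod p
  have h5 : ¬ IsSquare (5 : ZMod p) := by
    have hleg : legendreSym p 5 = -1 := by
      have hqr := legendreSym.quadratic_reciprocity_one_mod_four (p := 5) (q := p)
        (by norm_num) hp2
      norm_num at hqr
      rw [hqr, legendreSym.mod 5 (p : ℤ)]
      push_cast
      have : ((p : ℤ) % 5 = 3) ∨ ((p : ℤ) % 5 = 2) := by
        rcases hp5 with h' | h' <;> [left; right] <;> omega
      rcases this with h' | h' <;> rw [h'] <;> [exact leg_five_three; exact leg_five_two]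
    have := (legendreSym.eq_neg_one_iff p (a := 5)).mp hleg
    simpa using this
  rintro ⟨u, v, huv⟩
  have hfib : (Nat.fib p : ZMod p) = (u : ZMod p) ^ 2 := by
    have := congrArg (fun z : ℤ => (z : ZMod p)) huv
    push_cast at this
    simpa using this
  set f : (ZMod p)[X] := X ^ 2 - X - 1 with hf
  have hdeg : f.degree = 2 := by
    unfold f
    compute_degree!
  haveI : Nontrivial (AdjoinRoot f) := AdjoinRoot.nontrivial f (by rw [hdeg]; decide)
  haveI : CharP (AdjoinRoot f) p :=
    charP_of_injective_algebraMap' (ZMod p) (A := AdjoinRoot f) p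
  set α : AdjoinRoot f := AdjoinRoot.root f with hα
  have hroot : α ^ 2 = α + 1 := by
    have := AdjoinRoot.isRoot_root f
    simp [hf, IsRoot] at this
    linear_combination this
  set ι : ZMod p →+* AdjoinRoot f := algebraMap (ZMod p) (AdjoinRoot f) with hι
  have hinj : Function.Injective ι := ι.injective
  set s : AdjoinRoot f := 2 * α - 1 with hs
  have hs2 : s ^ 2 = 5 := by
    rw [hs]; linear_combination (4 : AdjoinRoot f) * hroot
  have heuler : (5 : ZMod p) ^ (p / 2) = -1 := by
    have := legendreSym.eq_pow p 5
    rw [(legendreSym.eq_neg_one_iff p (a := 5)).mpr (by simpa using h5)] at this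
    push_cast at this
    exact this.symm
  -- Frobenius: s^p = -s
  have hsp : s ^ p = -s := by
    calc s ^ p = (s ^ 2) ^ (p / 2) * s := by
          rw [← pow_mul, ← pow_succ]; congr 1; omega
      _ = (5 : AdjoinRoot f) ^ (p / 2) * s := by rw [hs2]
      _ = ι ((5 : ZMod p) ^ (p / 2)) * s := by rw [map_pow, map_ofNat]
      _ = -s := by rw [heuler, map_neg, map_one]; ring
  have hfrob : (2 : AdjoinRoot f) * α ^ p - 1 = -s := by
    have hchar : (2 * α + (-1) : AdjoinRoot f) ^ p = (2 * α) ^ p + (-1 : AdjoinRoot f) ^ p :=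
      add_pow_char (2 * α) (-1 : AdjoinRoot f) p
    have h2p : (2 : AdjoinRoot f) ^ p = 2 := by
      have h2 : ((2 : ZMod p)) ^ p = 2 := ZMod.pow_card 2
      calc (2 : AdjoinRoot f) ^ p = ι ((2 : ZMod p) ^ p) := by rw [map_pow, map_ofNat]
        _ = ι (2 : ZMod p) := by rw [h2]
        _ = 2 := by rw [map_ofNat]
    have hneg1 : (-1 : AdjoinRoot f) ^ p = -1 := Odd.neg_one_pow (Nat.odd_iff.mpr hpodd)
    have : s ^ p = (2 * α) ^ p + (-1 : AdjoinRoot f) ^ p := by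
      rw [hs]; rw [← hchar]; ring_nf
    rw [this, mul_pow, h2p, hneg1] at hsp
    linear_combination hsp
  have h2ne : (2 : ZMod p) ≠ 0 := by
    have : ((2 : ℕ) : ZMod p) ≠ 0 := by
      rw [Ne, ZMod.natCast_eq_zero_iff]
      intro hd
      have := Nat.le_of_dvd (by norm_num) hd
      omega
    simpa using this
  have h2unit : IsUnit (2 : AdjoinRoot f) := by
    have := (isUnit_iff_ne_zero.mpr h2ne).map ι
    rwa [map_ofNat] at this
  have hαp : α ^ p = 1 - α := by
    refine h2unit.mul_left_cancel ?_
    linear_combination hfrob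
  obtain ⟨m, hm⟩ : ∃ m, p = m + 1 := ⟨p - 1, by omega⟩
  have hfp : (Nat.fib p : AdjoinRoot f) * α + (Nat.fib m : AdjoinRoot f) = 1 - α := by
    have h1 := fib_pow_aux α hroot m
    rw [← hm] at h1
    rw [← h1]
    exact hαp
  have hkey : ((Nat.fib p : ZMod p) + 1) = 0 := by
    by_contra hne
    have hu : IsUnit ((Nat.fib p : ZMod p) + 1) := Ne.isUnit hne
    set c : ZMod p := ((Nat.fib p : ZMod p) + 1)⁻¹ * (1 - (Nat.fib m : ZMod p)) with hc
    have hαval : α = ι c := by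
      have h1 : ι ((Nat.fib p : ZMod p) + 1) * α = ι (1 - (Nat.fib m : ZMod p)) := by
        simp only [map_add, map_one, map_sub, map_natCast]
        linear_combination hfp
      have h2 : ι ((Nat.fib p : ZMod p) + 1) * α = ι ((Nat.fib p : ZMod p) + 1) * ι c := by
        rw [h1, hc, map_mul, ← mul_assoc, ← map_mul, mul_inv_cancel₀ hne, map_one, one_mul]
      exact (hu.map ι).mul_left_cancel h2
    have hc2 : c ^ 2 = c + 1 := by
      apply hinj
      rw [map_pow, map_add, map_one, ← hαval]
      exact hroot
    exact h5 ⟨2 * c - 1, by linear_combination (-4 : ZMod p) * hc2⟩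
  have hsq : IsSquare (-1 : ZMod p) := ⟨u, by linear_combination hfib - hkey⟩
  exact (ZMod.exists_sq_eq_neg_one_iff.mp hsq) hp4
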